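/- Let R be a commutative Noetherian ring and (Σ, Δ) a system of automorphisms σ₁,…,σₙ and σᵢ-derivations δ₁,…,δₙ of R. If R is (Σ,Δ)-prime (the only pair of nonzero ideals invariant under all σᵢ and all δᵢ with zero product does not exist), then the nilradical rad(R) is a Σ-prime ideal of R. -/

import Mathlib

section Aux

variable {R : Type*} [CommRing R]

/-- In a Noetherian ring, an ideal stable under an automorphism is stable under its inverse. -/
lemma aux_mem_of_apply_mem [IsNoetherianRing R] (e : R ≃+* R) (I : Ideal R)
    (hI : ∀ r ∈ I, e r ∈ I) : ∀ x, e x ∈ I → x ∈ I := by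
  -- consider the chain of comaps under powers of `e`
  have hmono : ∀ k : ℕ, I.comap ((e ^ k : R ≃+* R) : R →+* R)
      ≤ I.comap ((e ^ (k+1) : R ≃+* R) : R →+* R) := by
    intro k x hx
    simp only [Ideal.mem_comap] at hx ⊢
    have : (e ^ (k+1) : R ≃+* R) x = e ((e ^ k : R ≃+* R) x) := by
      rw [pow_succ']; rfl
    show (e ^ (k+1) : R ≃+* R) x ∈ I
    rw [this]
    exact hI _ hx
  set f : ℕ →o Ideal R :=
    ⟨fun k => I.comap ((e ^ k : R ≃+* R) : R →+* R), monotone_nat_of_le_succ hmono⟩ with hf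
  obtain ⟨m, hm⟩ := monotone_stabilizes_iff_noetherian.mpr inferInstance f
  intro y hy
  set z : R := ((e ^ m : R ≃+* R)).symm y with hz
  have h1 : (e ^ m : R ≃+* R) z = y := RingEquiv.apply_symm_apply _ y
  have h2 : (e ^ (m+1) : R ≃+* R) z = e y := by
    rw [pow_succ']
    show e ((e ^ m : R ≃+* R) z) = e y
    rw [h1]
  have hzmem : z ∈ f (m+1) := by
    show (e ^ (m+1) : R ≃+* R) z ∈ I
    rw [h2]; exact hy
  have : z ∈ f m := by rw [hm (m+1) (Nat.le_succ m)]; exact hzmem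
  have : (e ^ m : R ≃+* R) z ∈ I := this
  rwa [h1] at this

/-- Powers of an ideal invariant under a ring hom are invariant. -/
lemma aux_sinv_pow (e : R ≃+* R) (I : Ideal R) (hI : ∀ r ∈ I, e r ∈ I) (k : ℕ) :
    ∀ r ∈ I ^ k, e r ∈ I ^ k := by
  induction k with
  | zero => intro r _; simp
  | succ k ih =>
    intro r hr
    rw [pow_succ] at hr ⊢
    refine Submodule.mul_induction_on hr (fun m hm n hn => ?_) (fun x y hx hy => ?_)
    · rw [map_mul]; exact Ideal.mul_mem_mul (ih m hm) (hI n hn)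
    · rw [map_add]; exact add_mem hx hy

variable {n : ℕ} (σ : Fin n → R ≃+* R) (δ : Fin n → R → R)

/-- A σ-derivation drops the power of a σ-invariant ideal by at most one. -/
lemma aux_delta_pow (hadd : ∀ i, ∀ r s : R, δ i (r + s) = δ i r + δ i s)
    (hleib : ∀ i, ∀ r s : R, δ i (r * s) = σ i r * δ i s + δ i r * s)
    (I : Ideal R) (hI : ∀ i, ∀ r ∈ I, σ i r ∈ I) (i : Fin n) :
    ∀ k : ℕ, ∀ r ∈ I ^ (k+1), δ i r ∈ I ^ k := by
  intro k
  induction k with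
  | zero =>
    intro r _; simp
  | succ k ih =>
    intro r hr
    rw [pow_succ] at hr
    refine Submodule.mul_induction_on hr (fun m hm x hx => ?_) (fun x y hx hy => ?_)
    · rw [hleib]
      refine add_mem ?_ ?_
      · exact Ideal.mul_mem_right _ _ (aux_sinv_pow (σ i) I (hI i) (k+1) m hm)
      · rw [pow_succ]; exact Ideal.mul_mem_mul (ih m hm) hx
    · rw [hadd]; exact add_mem hx hy

/-- Powers of a (Σ,Δ)-invariant ideal are (Σ,Δ)-invariant (for positive exponents). -/
lemma aux_dinv_pow (hadd : ∀ i, ∀ r s : R, δ i (r + s) = δ i r + δ i s)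
    (hleib : ∀ i, ∀ r s : R, δ i (r * s) = σ i r * δ i s + δ i r * s)
    (I : Ideal R) (hIσ : ∀ i, ∀ r ∈ I, σ i r ∈ I) (hIδ : ∀ i, ∀ r ∈ I, δ i r ∈ I)
    (i : Fin n) : ∀ k : ℕ, ∀ r ∈ I ^ (k+1), δ i r ∈ I ^ (k+1) := by
  intro k
  induction k with
  | zero => intro r hr; rw [pow_one] at hr ⊢; exact hIδ i r hr
  | succ k ih =>
    intro r hr
    rw [pow_succ] at hr ⊢
    refine Submodule.mul_induction_on hr (fun m hm x hx => ?_) (fun x y hx hy => ?_)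
    · rw [hleib]
      refine add_mem ?_ ?_
      · exact Ideal.mul_mem_mul (aux_sinv_pow (σ i) I (hIσ i) (k+1) m hm) (hIδ i x hx)
      · exact Ideal.mul_mem_mul (ih m hm) hx
    · rw [hadd]; exact add_mem hx hy

/-- The stabilized annihilator of powers of a Σ-invariant ideal is (Σ,Δ)-invariant. -/
lemma aux_ann_inv [IsNoetherianRing R]
    (hadd : ∀ i, ∀ r s : R, δ i (r + s) = δ i r + δ i s)
    (hleib : ∀ i, ∀ r s : R, δ i (r * s) = σ i r * δ i s + δ i r * s)
    (I : Ideal R) (hI : ∀ i, ∀ r ∈ I, σ i r ∈ I) (k₀ : ℕ)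
    (hstab : ∀ m, k₀ ≤ m → (I ^ m).annihilator = (I ^ k₀).annihilator) :
    (∀ i, ∀ r ∈ (I ^ k₀).annihilator, σ i r ∈ (I ^ k₀).annihilator) ∧
    (∀ i, ∀ r ∈ (I ^ k₀).annihilator, δ i r ∈ (I ^ k₀).annihilator) := by
  have hδ0 : ∀ i, δ i 0 = 0 := by
    intro i
    have := hadd i 0 0
    rw [add_zero] at this
    exact left_eq_add.mp this
  have hσ : ∀ i, ∀ r ∈ (I ^ k₀).annihilator, σ i r ∈ (I ^ k₀).annihilator := by
    intro i r hr
    rw [Submodule.mem_annihilator] at hr ⊢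
    intro x hx
    have hx' : (σ i).symm x ∈ I ^ k₀ := by
      refine aux_mem_of_apply_mem (σ i) (I ^ k₀) (aux_sinv_pow (σ i) I (hI i) k₀) _ ?_
      rw [RingEquiv.apply_symm_apply]; exact hx
    have heq : σ i r * x = σ i (r * (σ i).symm x) := by
      rw [map_mul, RingEquiv.apply_symm_apply]
    have h0 : r * (σ i).symm x = 0 := by
      have := hr _ hx'
      rwa [smul_eq_mul] at this
    rw [smul_eq_mul, heq, h0, map_zero]
  refine ⟨hσ, ?_⟩
  intro i r hr
  rw [← hstab (k₀ + 1) (Nat.le_succ k₀)]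
  rw [Submodule.mem_annihilator]
  intro x hx
  have hrx : r * x = 0 := by
    have hx' : x ∈ I ^ k₀ := Ideal.pow_le_pow_right (Nat.le_succ k₀) hx
    have := Submodule.mem_annihilator.mp hr x hx'
    rwa [smul_eq_mul] at this
  have h1 : δ i (r * x) = 0 := by rw [hrx, hδ0]
  rw [hleib] at h1
  have h2 : σ i r * δ i x = 0 := by
    have hδx : δ i x ∈ I ^ k₀ := aux_delta_pow σ δ hadd hleib I hI i k₀ x hx
    have := Submodule.mem_annihilator.mp (hσ i r hr) _ hδx
    rwa [smul_eq_mul] at this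
  rw [h2, zero_add] at h1
  rw [smul_eq_mul, h1]

/-- Stabilization of the annihilator chain, above any given bound. -/
lemma aux_stab [IsNoetherianRing R] (I : Ideal R) (a : ℕ) :
    ∃ k₀, a ≤ k₀ ∧ ∀ m, k₀ ≤ m → (I ^ m).annihilator = (I ^ k₀).annihilator := by
  set f : ℕ →o Ideal R :=
    ⟨fun k => (I ^ k).annihilator, fun k m hkm =>
      Submodule.annihilator_mono (Ideal.pow_le_pow_right hkm)⟩ with hf
  obtain ⟨m0, hm0⟩ := monotone_stabilizes_iff_noetherian.mpr inferInstance f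
  refine ⟨max m0 a, le_max_right _ _, fun m hm => ?_⟩
  have h1 : f m0 = f m := hm0 m (le_trans (le_max_left m0 a) hm)
  have h2 : f m0 = f (max m0 a) := hm0 _ (le_max_left m0 a)
  show f m = f (max m0 a)
  rw [← h1, ← h2]

end Aux

/-- Let `R` be a commutative Noetherian ring and `(Σ, Δ)` a system of
automorphisms `σ 1, …, σ n` and `σ i`-derivations `δ 1, …, δ n` of `R`. If `R` is
`(Σ,Δ)`-prime (the zero ideal is `(Σ,Δ)`-prime: it is proper and there is no pair of nonzero
ideals invariant under all `σ i` and all `δ i` with zero product), then the nilradical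
`rad(R)` is a `Σ`-prime ideal of `R`. -/
theorem nilradical_sigmaPrime_of_sigmaDeltaPrime
    {R : Type*} [CommRing R] [IsNoetherianRing R] {n : ℕ}
    (σ : Fin n → R ≃+* R) (δ : Fin n → R → R)
    (hadd : ∀ i, ∀ r s : R, δ i (r + s) = δ i r + δ i s)
    (hleib : ∀ i, ∀ r s : R, δ i (r * s) = σ i r * δ i s + δ i r * s)
    (hbotproper : (⊥ : Ideal R) ≠ ⊤)
    (hSDprime : ∀ J K : Ideal R,
      (∀ i, ∀ r ∈ J, σ i r ∈ J) → (∀ i, ∀ r ∈ J, δ i r ∈ J) →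
      (∀ i, ∀ r ∈ K, σ i r ∈ K) → (∀ i, ∀ r ∈ K, δ i r ∈ K) →
      J * K = ⊥ → J = ⊥ ∨ K = ⊥) :
    nilradical R ≠ ⊤ ∧
    (∀ i, ∀ r ∈ nilradical R, σ i r ∈ nilradical R) ∧
    (∀ J K : Ideal R,
      (∀ i, ∀ r ∈ J, σ i r ∈ J) → (∀ i, ∀ r ∈ K, σ i r ∈ K) →
      J * K ≤ nilradical R → J ≤ nilradical R ∨ K ≤ nilradical R) := by
  have hnontriv : (1 : R) ≠ 0 := by
    intro h
    apply hbotproper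
    ext x
    simp only [Ideal.mem_bot, Submodule.mem_top, iff_true]
    calc x = x * 1 := (mul_one x).symm
    _ = 0 := by rw [h, mul_zero]
  refine ⟨?_, ?_, ?_⟩
  · -- nilradical proper
    intro h
    have h1 : (1 : R) ∈ nilradical R := h ▸ Submodule.mem_top
    obtain ⟨m, hm⟩ := mem_nilradical.mp h1
    rw [one_pow] at hm
    exact hnontriv hm
  · -- Σ-invariance
    intro i r hr
    rw [mem_nilradical] at hr ⊢
    exact hr.map ((σ i : R →+* R))
  · -- Σ-primeness
    intro J K hJ hK hJK
    by_contra hcon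
    push_neg at hcon
    obtain ⟨hJN, hKN⟩ := hcon
    -- nilpotency of the nilradical
    obtain ⟨t, ht⟩ := IsNoetherianRing.isNilpotent_nilradical R
    have htpos : 0 < t := by
      rcases Nat.eq_zero_or_pos t with h | h
      · exfalso
        rw [h, pow_zero, Ideal.one_eq_top] at ht
        exact hbotproper ht.symm
      · exact h
    -- powers stay outside the nilradical
    have hpow_not_le : ∀ (L : Ideal R), ¬ L ≤ nilradical R → ∀ m, 0 < m →
        ¬ L ^ m ≤ nilradical R := by
      intro L hL m hmpos hpow
      apply hL
      intro x hx
      have : x ^ m ∈ nilradical R := hpow (Ideal.pow_mem_pow hx m)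
      rw [mem_nilradical] at this ⊢
      exact this.of_pow
    have hpow_ne_bot : ∀ (L : Ideal R), ¬ L ≤ nilradical R → ∀ m, 0 < m → L ^ m ≠ ⊥ := by
      intro L hL m hmpos h
      exact hpow_not_le L hL m hmpos (h ▸ bot_le)
    -- J^t * K^t = 0
    have hJKt : J ^ t * K ^ t = ⊥ := by
      have h1 : (J * K) ^ t ≤ nilradical R ^ t := Ideal.pow_right_mono hJK t
      rw [ht, mul_pow] at h1
      exact le_bot_iff.mp h1
    -- A := stabilized annihilator of powers of K
    obtain ⟨m₀, hm₀t, hm₀⟩ := aux_stab K t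
    set A : Ideal R := (K ^ m₀).annihilator with hA
    obtain ⟨hAσ, hAδ⟩ := aux_ann_inv σ δ hadd hleib K hK m₀ hm₀
    -- J^t ≤ A, so A is not inside the nilradical
    have hJtA : J ^ t ≤ A := by
      intro x hx
      rw [hA, Submodule.mem_annihilator]
      intro y hy
      have hy' : y ∈ K ^ t := Ideal.pow_le_pow_right hm₀t hy
      have : x * y ∈ J ^ t * K ^ t := Ideal.mul_mem_mul hx hy'
      rw [hJKt] at this
      rwa [smul_eq_mul]
    have hAnotN : ¬ A ≤ nilradical R := fun h =>
      hpow_not_le J hJN t htpos (le_trans hJtA h)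
    -- K^m₀ ≤ ann A
    have hKA : K ^ m₀ ≤ A.annihilator := by
      intro y hy
      rw [Submodule.mem_annihilator]
      intro a ha
      rw [smul_eq_mul, mul_comm]
      have := Submodule.mem_annihilator.mp ha y hy
      rwa [smul_eq_mul] at this
    -- B := stabilized annihilator of powers of A
    obtain ⟨k₀, hk₀1, hk₀⟩ := aux_stab A 1
    set B : Ideal R := (A ^ k₀).annihilator with hB
    obtain ⟨hBσ, hBδ⟩ := aux_ann_inv σ δ hadd hleib A hAσ k₀ hk₀
    have hAk1 : A ^ k₀ ≤ A := by
      have := Ideal.pow_le_pow_right (I := A) hk₀1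
      rwa [pow_one] at this
    have hKB : K ^ m₀ ≤ B := le_trans hKA (Submodule.annihilator_mono hAk1)
    -- the pair (A^k₀, B) is (Σ,Δ)-invariant with zero product
    have hprod : A ^ k₀ * B = ⊥ := by
      rw [eq_bot_iff]
      rw [Ideal.mul_le]
      intro a ha b hb
      rw [Ideal.mem_bot, mul_comm]
      have := Submodule.mem_annihilator.mp hb a ha
      rwa [smul_eq_mul] at this
    obtain ⟨k₁, hk₁⟩ : ∃ k₁, k₀ = k₁ + 1 := ⟨k₀ - 1, (Nat.succ_pred_eq_of_pos hk₀1).symm⟩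
    have hAkσ : ∀ i, ∀ r ∈ A ^ k₀, σ i r ∈ A ^ k₀ := fun i => aux_sinv_pow (σ i) A (hAσ i) k₀
    have hAkδ : ∀ i, ∀ r ∈ A ^ k₀, δ i r ∈ A ^ k₀ := by
      intro i
      rw [hk₁]
      exact aux_dinv_pow σ δ hadd hleib A hAσ hAδ i k₁
    rcases hSDprime (A ^ k₀) B hAkσ hAkδ hBσ hBδ hprod with h | h
    · exact hpow_ne_bot A hAnotN k₀ hk₀1 h
    · exact hpow_ne_bot K hKN m₀ (lt_of_lt_of_le htpos hm₀t) (le_bot_iff.mp (h ▸ hKB))
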